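/- arXiv:2602.05203 — 3 statements merged into one kernel-verified Lean document; each statement's English description precedes it below -/
import Mathlib

section
/- Let k ≥ 1 and let λ ∈ ℂ satisfy ∏_{j=1}^{k}(λ + j(j−1)) = ∏_{i=1}^{k}(2i−1)²/4. Then Re λ ≤ 1/4. -/
theorem stmt_2 (k : ℕ) (hk : 1 ≤ k) (lam : ℂ)
    (h : ∏ j ∈ Finset.Icc 1 k, (lam + (j : ℂ) * ((j : ℂ) - 1)) =
      ∏ i ∈ Finset.Icc 1 k, ((2 * (i : ℂ) - 1) ^ 2 / 4)) :
    lam.re ≤ 1 / 4 := by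
  by_contra hlt
  push_neg at hlt
  have habs := congrArg (‖·‖) h
  rw [norm_prod, norm_prod] at habs
  have hcontra : ∏ j ∈ Finset.Icc 1 k, ‖(2 * (j : ℂ) - 1) ^ 2 / 4‖
      < ∏ j ∈ Finset.Icc 1 k, ‖lam + (j : ℂ) * ((j : ℂ) - 1)‖ := by
    apply Finset.prod_lt_prod_of_nonempty
    · intro j hj
      have hj1 : (1 : ℝ) ≤ (j : ℝ) := by
        exact_mod_cast (Finset.mem_Icc.mp hj).1
      have : ‖(2 * (j : ℂ) - 1) ^ 2 / 4‖
          = (2 * (j : ℝ) - 1) ^ 2 / 4 := by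
        rw [show (2 * (j : ℂ) - 1) ^ 2 / 4 = (((2 * (j : ℝ) - 1) ^ 2 / 4 : ℝ) : ℂ) by
          push_cast; ring]
        rw [Complex.norm_real, Real.norm_eq_abs, abs_of_nonneg (by positivity)]
      rw [this]
      nlinarith
    · intro j hj
      have hj1 : (1 : ℝ) ≤ (j : ℝ) := by
        exact_mod_cast (Finset.mem_Icc.mp hj).1
      have habsj : ‖(2 * (j : ℂ) - 1) ^ 2 / 4‖
          = (2 * (j : ℝ) - 1) ^ 2 / 4 := by
        rw [show (2 * (j : ℂ) - 1) ^ 2 / 4 = (((2 * (j : ℝ) - 1) ^ 2 / 4 : ℝ) : ℂ) by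
          push_cast; ring]
        rw [Complex.norm_real, Real.norm_eq_abs, abs_of_nonneg (by positivity)]
      have hre : (lam + (j : ℂ) * ((j : ℂ) - 1)).re = lam.re + (j : ℝ) * ((j : ℝ) - 1) := by
        simp [Complex.add_re, Complex.mul_re]
      have hle := Complex.re_le_norm (lam + (j : ℂ) * ((j : ℂ) - 1))
      rw [hre] at hle
      rw [habsj]
      nlinarith
    · exact Finset.nonempty_Icc.mpr hk
  rw [habs] at hcontra
  exact lt_irrefl _ hcontra
end

section
/- For all ρ > 0, n ≥ 3, and t ∈ [0,π], the quantity f(ρ) = (2−n)·cosh(ρ)/sinh(ρ) + ((n−3)/2)·sinh(ρ)/(cosh(ρ) − 1) is strictly negative. Consequently (2−n)·cosh(ρ)/sinh(ρ) + ((n−4)/2 − θ)·sinh(ρ)/(cosh(ρ) + cos t) < 0 whenever θ ≥ −1/2. -/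
theorem stmt_3 (n : ℕ) (hn : 3 ≤ n) (ρ t θ : ℝ) (hρ : 0 < ρ)
    (ht : t ∈ Set.Icc 0 Real.pi) (hθ : -(1 / 2) ≤ θ) :
    ((2 - (n : ℝ)) * Real.cosh ρ / Real.sinh ρ
        + (((n : ℝ) - 3) / 2) * Real.sinh ρ / (Real.cosh ρ - 1) < 0) ∧
    ((2 - (n : ℝ)) * Real.cosh ρ / Real.sinh ρ
        + (((n : ℝ) - 4) / 2 - θ) * Real.sinh ρ / (Real.cosh ρ + Real.cos t) < 0) := by
  have hn3 : (3 : ℝ) ≤ (n : ℝ) := by exact_mod_cast hn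
  set c := Real.cosh ρ with hcdef
  set s := Real.sinh ρ with hsdef
  have hs : 0 < s := Real.sinh_pos_iff.mpr hρ
  have hc : 1 < c := by
    rw [hcdef, Real.one_lt_cosh]
    exact ne_of_gt hρ
  have hss : s * s = c * c - 1 := by
    have := Real.cosh_sq ρ
    rw [← hcdef, ← hsdef] at this
    nlinarith [this]
  have hcm1 : 0 < c - 1 := sub_pos.mpr hc
  have hcos : -1 ≤ Real.cos t := Real.neg_one_le_cos t
  have hd : 0 < c + Real.cos t := by linarith
  have h1 : (2 - (n : ℝ)) * c / s + (((n : ℝ) - 3) / 2) * s / (c - 1) < 0 := by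
    rw [div_add_div _ _ (ne_of_gt hs) (ne_of_gt hcm1), div_neg_iff]
    right
    constructor
    · nlinarith [mul_pos hcm1 hcm1, mul_pos hs hcm1]
    · positivity
  refine ⟨h1, ?_⟩
  have key : (((n : ℝ) - 4) / 2 - θ) * s / (c + Real.cos t)
      ≤ (((n : ℝ) - 3) / 2) * s / (c - 1) := by
    rcases le_or_gt (((n : ℝ) - 4) / 2 - θ) 0 with hA | hA
    · have h0 : (((n : ℝ) - 4) / 2 - θ) * s / (c + Real.cos t) ≤ 0 := by
        apply div_nonpos_of_nonpos_of_nonneg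
        · exact mul_nonpos_of_nonpos_of_nonneg hA hs.le
        · linarith
      have h1' : 0 ≤ (((n : ℝ) - 3) / 2) * s / (c - 1) :=
        div_nonneg (mul_nonneg (by linarith) hs.le) hcm1.le
      linarith
    · rw [div_le_div_iff₀ hd hcm1]
      have hAle : 0 ≤ ((n : ℝ) - 3) / 2 - (((n : ℝ) - 4) / 2 - θ) := by linarith
      nlinarith [mul_nonneg (mul_nonneg hAle hs.le) hcm1.le,
        mul_nonneg (mul_nonneg (by linarith : (0:ℝ) ≤ ((n : ℝ) - 3) / 2) hs.le)
          (by linarith : (0:ℝ) ≤ Real.cos t + 1)]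
  linarith
end

section
/- Let μ be a finite positive Borel measure on a metric space X with μ(X) = 1, and ν a finite positive Borel measure on X, and suppose there is a constant C₀ > 0 such that for all bounded continuous φ ≥ 0: (∫ φ^q dμ)^{1/q} ≤ C₀ (∫ φ^p dν)^{1/p} with 1 ≤ p < q < ∞. Then the set A = {x : μ({x}) > 0} of atoms of μ satisfies: for every atom x with μ({x}) = u > 0, one has ν({x}) ≥ C₀^{−p}·u^{p/q}. -/
open MeasureTheory Filter Topology

theorem stmt_14 {X : Type*} [MetricSpace X] [MeasurableSpace X] [BorelSpace X]
    (μ ν : Measure X) [IsFiniteMeasure μ] [IsFiniteMeasure ν]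
    (hμ : μ Set.univ = 1) (C₀ p q : ℝ) (hC₀ : 0 < C₀) (hp : 1 ≤ p) (hpq : p < q)
    (hineq : ∀ φ : X → ℝ, Continuous φ → (∃ M, ∀ x, |φ x| ≤ M) → (∀ x, 0 ≤ φ x) →
      (∫ x, φ x ^ q ∂μ) ^ (1 / q) ≤ C₀ * (∫ x, φ x ^ p ∂ν) ^ (1 / p)) :
    ∀ x : X, 0 < μ {x} →
      C₀ ^ (-p) * ((μ {x}).toReal) ^ (p / q) ≤ (ν {x}).toReal := by
  intro x _
  have hp0 : (0:ℝ) < p := lt_of_lt_of_le one_pos hp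
  have hq0 : (0:ℝ) < q := hp0.trans hpq
  set u := (μ {x}).toReal with hu
  set v := (ν {x}).toReal with hv
  have hu0 : 0 ≤ u := ENNReal.toReal_nonneg
  have hv0 : 0 ≤ v := ENNReal.toReal_nonneg
  -- key inequality for each radius r > 0
  have key : ∀ r : ℝ, 0 < r →
      u ^ (1/q) ≤ C₀ * ((ν (Metric.closedBall x r)).toReal) ^ (1/p) := by
    intro r hr
    set φ : X → ℝ := fun y => max 0 (1 - dist x y / r) with hφ
    have hφc : Continuous φ := by
      apply Continuous.max continuous_const
      exact continuous_const.sub ((continuous_const.dist continuous_id).div_const r)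
    have hφ0 : ∀ y, 0 ≤ φ y := fun y => le_max_left _ _
    have hφ1 : ∀ y, φ y ≤ 1 := by
      intro y
      apply max_le (by norm_num)
      have : 0 ≤ dist x y / r := div_nonneg dist_nonneg hr.le
      linarith
    have hbdd : ∃ M, ∀ y, |φ y| ≤ M :=
      ⟨1, fun y => abs_le.mpr ⟨by linarith [hφ0 y], hφ1 y⟩⟩
    have hφx : φ x = 1 := by simp [hφ]
    have hφout : ∀ y, y ∉ Metric.closedBall x r → φ y = 0 := by
      intro y hy
      rw [Metric.mem_closedBall, dist_comm] at hy
      push_neg at hy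
      have : 1 - dist x y / r < 0 := by
        rw [sub_neg]
        exact (one_lt_div hr).mpr hy
      simp [hφ, le_of_lt this]
    have H := hineq φ hφc hbdd hφ0
    -- integrability
    have hmq : AEStronglyMeasurable (fun y => φ y ^ q) μ :=
      (hφc.rpow_const (fun y => Or.inr hq0.le)).aestronglyMeasurable
    have hmp : AEStronglyMeasurable (fun y => φ y ^ p) ν :=
      (hφc.rpow_const (fun y => Or.inr hp0.le)).aestronglyMeasurable
    have hbq : ∀ y, ‖φ y ^ q‖ ≤ 1 := by
      intro y
      rw [Real.norm_of_nonneg (Real.rpow_nonneg (hφ0 y) q)]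
      exact Real.rpow_le_one (hφ0 y) (hφ1 y) hq0.le
    have hbp : ∀ y, ‖φ y ^ p‖ ≤ 1 := by
      intro y
      rw [Real.norm_of_nonneg (Real.rpow_nonneg (hφ0 y) p)]
      exact Real.rpow_le_one (hφ0 y) (hφ1 y) hp0.le
    have intq : Integrable (fun y => φ y ^ q) μ :=
      Integrable.mono' (integrable_const 1) hmq (Filter.Eventually.of_forall hbq)
    have intp : Integrable (fun y => φ y ^ p) ν :=
      Integrable.mono' (integrable_const 1) hmp (Filter.Eventually.of_forall hbp)
    have h1 : u ≤ ∫ y, φ y ^ q ∂μ := by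
      have := setIntegral_le_integral (μ := μ) (s := {x}) intq
        (Filter.Eventually.of_forall fun y => Real.rpow_nonneg (hφ0 y) q)
      refine le_trans (le_of_eq ?_) this
      rw [Measure.restrict_singleton, integral_smul_measure, integral_dirac]
      simp [hφx, Real.one_rpow, hu]
    have h2 : ∫ y, φ y ^ p ∂ν ≤ (ν (Metric.closedBall x r)).toReal := by
      have hind : Integrable ((Metric.closedBall x r).indicator (fun _ => (1:ℝ))) ν :=
        (integrable_const 1).indicator measurableSet_closedBall
      have hle : ∀ y, φ y ^ p ≤ (Metric.closedBall x r).indicator (fun _ => (1:ℝ)) y := by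
        intro y
        by_cases hy : y ∈ Metric.closedBall x r
        · rw [Set.indicator_of_mem hy]
          exact Real.rpow_le_one (hφ0 y) (hφ1 y) hp0.le
        · simp [Set.indicator_of_notMem hy, hφout y hy, Real.zero_rpow hp0.ne']
      calc ∫ y, φ y ^ p ∂ν ≤ ∫ y, (Metric.closedBall x r).indicator (fun _ => (1:ℝ)) y ∂ν :=
            integral_mono intp hind hle
        _ = (ν (Metric.closedBall x r)).toReal := by
            rw [integral_indicator_const _ measurableSet_closedBall]; simp [Measure.real]
    calc u ^ (1/q) ≤ (∫ y, φ y ^ q ∂μ) ^ (1/q) :=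
          Real.rpow_le_rpow hu0 h1 (by positivity)
      _ ≤ C₀ * (∫ y, φ y ^ p ∂ν) ^ (1/p) := H
      _ ≤ C₀ * ((ν (Metric.closedBall x r)).toReal) ^ (1/p) := by
          gcongr
  -- pass to the limit r → 0
  have hlim : Tendsto (fun n : ℕ => (ν (Metric.closedBall x (1/(n+1)))).toReal)
      atTop (𝓝 v) := by
    have hinter : ⋂ n : ℕ, Metric.closedBall x (1/(n+1)) = {x} := by
      ext y
      simp only [Set.mem_iInter, Metric.mem_closedBall, Set.mem_singleton_iff]
      constructor
      · intro h
        by_contra hne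
        have hd : 0 < dist y x := dist_pos.mpr hne
        obtain ⟨n, hn⟩ := exists_nat_one_div_lt hd
        exact absurd (h n) (not_le.mpr (by exact_mod_cast hn))
      · rintro rfl n; rw [dist_self]; positivity
    have hanti : Antitone fun n : ℕ => Metric.closedBall x (1/(n+1)) := by
      intro m n hmn
      apply Metric.closedBall_subset_closedBall
      have hc : (m:ℝ) ≤ n := Nat.cast_le.mpr hmn
      apply one_div_le_one_div_of_le (by positivity)
      linarith
    have hmeas := tendsto_measure_iInter_atTop (μ := ν)
      (fun n : ℕ => (measurableSet_closedBall
        (x := x) (ε := 1/(n+1))).nullMeasurableSet) hanti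
      ⟨0, measure_ne_top ν _⟩
    rw [hinter] at hmeas
    exact (ENNReal.tendsto_toReal (measure_ne_top ν _)).comp hmeas
  have hfin : u ^ (1/q) ≤ C₀ * v ^ (1/p) := by
    refine ge_of_tendsto ((hlim.rpow_const (p := 1/p) (Or.inr (by positivity))).const_mul C₀)
      (Filter.Eventually.of_forall fun n => key (1/(n+1)) (by positivity))
  -- algebra
  have hup : u ^ (p/q) ≤ C₀ ^ p * v := by
    have h3 : (u ^ (1/q)) ^ p ≤ (C₀ * v ^ (1/p)) ^ p :=
      Real.rpow_le_rpow (Real.rpow_nonneg hu0 _) hfin hp0.le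
    rw [← Real.rpow_mul hu0, one_div_mul_eq_div,
      Real.mul_rpow hC₀.le (Real.rpow_nonneg hv0 _), ← Real.rpow_mul hv0,
      one_div_mul_cancel hp0.ne', Real.rpow_one] at h3
    exact h3
  rw [Real.rpow_neg hC₀.le, inv_mul_le_iff₀ (Real.rpow_pos_of_pos hC₀ p)]
  exact hup
end
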